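/- Let ν be a Borel measure on ℝ^d that is finite on compact sets, let {S_n} be a sequence of nonempty compact sets, and let S be a nonempty compact set with ν(∂S) = 0. If d_H(S_n, S) → 0 and d_H(∂S_n, ∂S) → 0, then ν(S_n Δ S) → 0. -/

import Mathlib

open Metric Set MeasureTheory Filter

/-- A preconnected set meeting both `s` and its complement meets the frontier of `s`. -/
lemma aux_preconnected_frontier {X : Type*} [TopologicalSpace X] {t s : Set X}
    (ht : IsPreconnected t) (h1 : (t ∩ s).Nonempty) (h2 : (t \ s).Nonempty) :
    (t ∩ frontier s).Nonempty := by
  by_contra h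
  rw [not_nonempty_iff_eq_empty] at h
  have hsub : t ⊆ interior s ∪ interior sᶜ := by
    intro x hx
    have hxf : x ∉ frontier s := fun hf => (eq_empty_iff_forall_notMem.1 h x) ⟨hx, hf⟩
    by_cases hc : x ∈ closure s
    · left
      by_contra hi
      exact hxf ⟨hc, hi⟩
    · right
      rwa [interior_compl, mem_compl_iff]
  have h1' : (t ∩ interior s).Nonempty := by
    obtain ⟨x, hxt, hxs⟩ := h1
    have hxf : x ∉ frontier s := fun hf => (eq_empty_iff_forall_notMem.1 h x) ⟨hxt, hf⟩
    have : x ∈ interior s := by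
      rcases hsub hxt with h' | h'
      · exact h'
      · exact absurd hxs (by simpa using interior_subset h')
    exact ⟨x, hxt, this⟩
  have h2' : (t ∩ interior sᶜ).Nonempty := by
    obtain ⟨x, hxt, hxs⟩ := h2
    have : x ∈ interior sᶜ := by
      rcases hsub hxt with h' | h'
      · exact absurd (interior_subset h') hxs
      · exact h'
    exact ⟨x, hxt, this⟩
  obtain ⟨x, _, hx1, hx2⟩ :=
    ht (interior s) (interior sᶜ) isOpen_interior isOpen_interior hsub h1' h2'
  exact (interior_subset hx2) (interior_subset hx1)

/-- If `x ∉ C` and `y ∈ C` in a real normed space, the segment from `x` to `y`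
crosses `frontier C` at a point no farther from `x` than `y` is. -/
lemma aux_cross_frontier {E : Type*} [NormedAddCommGroup E] [NormedSpace ℝ E]
    {C : Set E} {x y : E} (hx : x ∉ C) (hy : y ∈ C) :
    ∃ z ∈ frontier C, dist x z ≤ dist x y := by
  have hseg : IsPreconnected (segment ℝ x y) := (convex_segment x y).isPreconnected
  have h1 : (segment ℝ x y ∩ C).Nonempty := ⟨y, right_mem_segment ℝ x y, hy⟩
  have h2 : (segment ℝ x y \ C).Nonempty := ⟨x, left_mem_segment ℝ x y, hx⟩
  obtain ⟨z, hzseg, hzf⟩ := aux_preconnected_frontier hseg h1 h2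
  refine ⟨z, hzf, ?_⟩
  have := dist_add_dist_of_mem_segment hzseg
  linarith [dist_nonneg (x := z) (y := y)]

theorem measure_symmDiff_tendsto_zero_of_full_convergence {d : ℕ}
    (ν : Measure (EuclideanSpace ℝ (Fin d))) [IsFiniteMeasureOnCompacts ν]
    (Sn : ℕ → Set (EuclideanSpace ℝ (Fin d))) (S : Set (EuclideanSpace ℝ (Fin d)))
    (hSn : ∀ n, IsCompact (Sn n)) (hSn' : ∀ n, (Sn n).Nonempty)
    (hS : IsCompact S) (hS' : S.Nonempty)
    (hbd : ν (frontier S) = 0)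
    (h1 : Tendsto (fun n => Metric.hausdorffDist (Sn n) S) atTop (nhds 0))
    (h2 : Tendsto (fun n => Metric.hausdorffDist (frontier (Sn n)) (frontier S)) atTop (nhds 0)) :
    Tendsto (fun n => ν (symmDiff (Sn n) S)) atTop (nhds 0) := by
  -- frontier of S is compact
  have hFc : IsCompact (frontier S) :=
    hS.of_isClosed_subset isClosed_frontier hS.isClosed.frontier_subset
  -- measures of cthickenings of frontier S tend to ν (frontier S) = 0
  have htend : Tendsto (fun r => ν (cthickening r (frontier S))) (nhds 0) (nhds 0) := by
    have := tendsto_measure_cthickening_of_isCompact (μ := ν) hFc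
    rwa [hbd] at this
  rw [ENNReal.tendsto_nhds_zero]
  intro ε hε
  -- choose δ > 0 with ν (cthickening δ (frontier S)) ≤ ε
  have hev : ∀ᶠ r in nhds (0 : ℝ), ν (cthickening r (frontier S)) ≤ ε :=
    (ENNReal.tendsto_nhds_zero.mp htend) ε hε
  obtain ⟨δ, hνδ, hδpos⟩ :=
    ((hev.filter_mono nhdsWithin_le_nhds).and
      (self_mem_nhdsWithin (s := Set.Ioi (0 : ℝ)) (a := (0:ℝ)))).exists
  have hδpos' : (0:ℝ) < δ := hδpos
  -- eventually both Hausdorff distances are < δ/2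
  have hev1 : ∀ᶠ n in atTop, Metric.hausdorffDist (Sn n) S < δ / 2 :=
    h1.eventually (gt_mem_nhds (by linarith))
  have hev2 : ∀ᶠ n in atTop,
      Metric.hausdorffDist (frontier (Sn n)) (frontier S) < δ / 2 :=
    h2.eventually (gt_mem_nhds (by linarith))
  filter_upwards [hev1, hev2] with n hn1 hn2
  -- key inclusion: symmDiff (Sn n) S ⊆ thickening δ (frontier S)
  have hne : Metric.hausdorffEDist (Sn n) S ≠ ⊤ :=
    hausdorffEdist_ne_top_of_nonempty_of_bounded (hSn' n) hS' (hSn n).isBounded hS.isBounded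
  have hincl : symmDiff (Sn n) S ⊆ thickening δ (frontier S) := by
    intro x hx
    rw [Set.mem_symmDiff] at hx
    rcases hx with ⟨hxn, hxS⟩ | ⟨hxS, hxn⟩
    · -- x ∈ Sn n \ S
      obtain ⟨y, hyS, hyd⟩ := hS.exists_infDist_eq_dist hS' x
      have hle : infDist x S ≤ hausdorffDist (Sn n) S :=
        infDist_le_hausdorffDist_of_mem hxn hne
      obtain ⟨z, hzf, hzd⟩ := aux_cross_frontier hxS hyS
      rw [mem_thickening_iff]
      exact ⟨z, hzf, by rw [← hyd] at hzd; linarith⟩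
    · -- x ∈ S \ Sn n
      obtain ⟨y, hyn, hyd⟩ := (hSn n).exists_infDist_eq_dist (hSn' n) x
      have hle : infDist x (Sn n) ≤ hausdorffDist S (Sn n) :=
        infDist_le_hausdorffDist_of_mem hxS (by rwa [Metric.hausdorffEDist_comm] at hne)
      rw [Metric.hausdorffDist_comm] at hle
      obtain ⟨z, hzf, hzd⟩ := aux_cross_frontier hxn hyn
      -- z ∈ frontier (Sn n), dist x z < δ/2
      have hzx : dist x z < δ / 2 := by rw [← hyd] at hzd; linarith
      -- frontier S is nonempty since z exists and Hausdorff edist between frontiers finite?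
      -- use Hausdorff distance between frontiers
      have hfSn : IsCompact (frontier (Sn n)) :=
        (hSn n).of_isClosed_subset isClosed_frontier (hSn n).isClosed.frontier_subset
      have hfS_ne : (frontier S).Nonempty := by
        haveI : Nontrivial (EuclideanSpace ℝ (Fin d)) := by
          by_contra hnt
          rw [not_nontrivial_iff_subsingleton] at hnt
          exact hxn (((hSn' n).eq_univ) ▸ Set.mem_univ x)
        haveI : NoncompactSpace (EuclideanSpace ℝ (Fin d)) :=
          NormedSpace.noncompactSpace ℝ _
        refine nonempty_frontier_iff.mpr ⟨hS', fun hU => ?_⟩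
        exact NoncompactSpace.noncompact_univ (hU ▸ hS)
      have hne' : Metric.hausdorffEDist (frontier (Sn n)) (frontier S) ≠ ⊤ :=
        hausdorffEdist_ne_top_of_nonempty_of_bounded ⟨z, hzf⟩ hfS_ne
          hfSn.isBounded hFc.isBounded
      have hle2 : infDist z (frontier S) ≤
          hausdorffDist (frontier (Sn n)) (frontier S) :=
        infDist_le_hausdorffDist_of_mem hzf hne'
      obtain ⟨w, hwf, hwd⟩ := hFc.exists_infDist_eq_dist hfS_ne z
      rw [mem_thickening_iff]
      refine ⟨w, hwf, ?_⟩
      calc dist x w ≤ dist x z + dist z w := dist_triangle x z w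
        _ < δ / 2 + δ / 2 := by rw [← hwd]; exact add_lt_add hzx (hle2.trans_lt hn2)
        _ = δ := by ring
  calc ν (symmDiff (Sn n) S) ≤ ν (cthickening δ (frontier S)) :=
        measure_mono (hincl.trans (thickening_subset_cthickening δ _))
    _ ≤ ε := hνδ
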